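/- The volume of an ideal hyperbolic tetrahedron with dihedral angles α, β, γ (where α + β + γ = π, and opposite edges have equal angles) equals Л(α) + Л(β) + Л(γ), where Л is the Lobachevsky function; this volume is maximized when α = β = γ = π/3, giving the maximal volume 3Л(π/3). -/

import Mathlib

open Real

/-- The Lobachevsky function `Л(θ) = -∫₀^θ log |2 sin u| du`. -/
noncomputable def lobachevsky (θ : ℝ) : ℝ :=
  -∫ u in (0 : ℝ)..θ, Real.log |2 * Real.sin u|

namespace LobAux

noncomputable def h (u : ℝ) : ℝ := Real.log |2 * Real.sin u|

lemma h_meas : Measurable h := by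
  unfold h
  exact Real.measurable_log.comp ((measurable_const.mul Real.measurable_sin).abs)

lemma h_eq {u : ℝ} (h0 : 0 < u) (h1 : u < π) : h u = Real.log (2 * Real.sin u) := by
  have hs : 0 < Real.sin u := Real.sin_pos_of_pos_of_lt_pi h0 h1
  unfold h
  rw [abs_of_pos (by positivity)]

lemma h_contAt {x : ℝ} (h0 : 0 < x) (h1 : x < π) : ContinuousAt h x := by
  have hs : 0 < Real.sin x := Real.sin_pos_of_pos_of_lt_pi h0 h1
  have hne : |2 * Real.sin x| ≠ 0 := by positivity
  exact (((continuous_const.mul Real.continuous_sin).abs).continuousAt).log hne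

lemma integrable_base :
    MeasureTheory.IntegrableOn h (Set.Ioc 0 (1/2)) MeasureTheory.volume := by
  have hg : MeasureTheory.IntegrableOn (fun u : ℝ => 2 * u ^ (-(1/2) : ℝ))
      (Set.Ioc 0 (1/2)) MeasureTheory.volume := by
    rw [integrableOn_Ioc_iff_integrableOn_Ioo]
    exact ((intervalIntegral.integrableOn_Ioo_rpow_iff (by norm_num)).2 (by norm_num)).const_mul 2
  refine hg.integrable.mono' (h_meas.aestronglyMeasurable) ?_
  rw [MeasureTheory.ae_restrict_iff' measurableSet_Ioc]
  filter_upwards with u hu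
  obtain ⟨hu0, hu2⟩ := hu
  have huπ : u < π := lt_of_le_of_lt hu2 (by linarith [Real.pi_gt_three])
  have hup2 : u ≤ π / 2 := le_trans hu2 (by linarith [Real.pi_gt_three])
  have hs : 0 < Real.sin u := Real.sin_pos_of_pos_of_lt_pi hu0 huπ
  have hsu : Real.sin u < u := Real.sin_lt hu0
  have hls : 2 / π * u ≤ Real.sin u := Real.mul_le_sin hu0.le hup2
  have hpi : 0 < π := Real.pi_pos
  -- log (2 sin u) ≤ 0
  have hle0 : Real.log (2 * Real.sin u) ≤ 0 := by
    apply Real.log_nonpos (by positivity)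
    nlinarith
  -- -log(2 sin u) ≤ -log u
  have hlower : Real.log u - Real.log π + Real.log 2 + Real.log 2
      ≤ Real.log (2 * Real.sin u) := by
    have : 2 / π * 2 * u ≤ 2 * Real.sin u := by nlinarith
    calc Real.log u - Real.log π + Real.log 2 + Real.log 2
        = Real.log (2 / π * 2 * u) := by
          rw [show (2:ℝ) / π * 2 * u = 2 * 2 / π * u by ring, Real.log_mul (by positivity) hu0.ne',
            Real.log_div (by norm_num) hpi.ne', Real.log_mul (by norm_num) (by norm_num)]
          ring
      _ ≤ Real.log (2 * Real.sin u) := Real.log_le_log (by positivity) this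
  have hpil4 : Real.log π ≤ Real.log 2 + Real.log 2 := by
    rw [← Real.log_mul (by norm_num) (by norm_num)]
    exact Real.log_le_log hpi (by norm_num [Real.pi_le_four])
  have habs : ‖h u‖ ≤ -Real.log u := by
    rw [h_eq hu0 huπ, Real.norm_eq_abs, abs_of_nonpos hle0]
    linarith
  have hlogu : -Real.log u ≤ 2 * u ^ (-(1/2) : ℝ) := by
    have := Real.log_le_rpow_div (x := u⁻¹) (ε := 1/2) (by positivity) (by norm_num)
    rw [Real.log_inv] at this
    have hrw : (u⁻¹) ^ ((1:ℝ)/2) = u ^ (-(1/2) : ℝ) := by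
      rw [Real.inv_rpow hu0.le, ← Real.rpow_neg hu0.le]
    rw [hrw] at this
    linarith
  linarith

lemma integrable_h {θ : ℝ} (h0 : 0 < θ) (h1 : θ < π) :
    IntervalIntegrable h MeasureTheory.volume 0 θ := by
  rw [intervalIntegrable_iff_integrableOn_Ioc_of_le h0.le]
  rcases le_total θ (1/2) with hc | hc
  · exact integrable_base.mono_set (Set.Ioc_subset_Ioc_right hc)
  · have hsplit : Set.Ioc (0:ℝ) θ = Set.Ioc 0 (1/2) ∪ Set.Ioc (1/2) θ :=
      (Set.Ioc_union_Ioc_eq_Ioc (by norm_num) hc).symm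
    rw [hsplit]
    refine integrable_base.union ?_
    have hcont : ContinuousOn h (Set.Icc (1/2) θ) := fun x hx =>
      (h_contAt (lt_of_lt_of_le (by norm_num) hx.1) (lt_of_le_of_lt hx.2 h1)).continuousWithinAt
    exact (hcont.integrableOn_Icc).mono_set Set.Ioc_subset_Icc_self

lemma hasDerivAt_lob {θ : ℝ} (h0 : 0 < θ) (h1 : θ < π) :
    HasDerivAt lobachevsky (-Real.log (2 * Real.sin θ)) θ := by
  have key : HasDerivAt (fun t => ∫ u in (0:ℝ)..t, h u) (h θ) θ :=
    intervalIntegral.integral_hasDerivAt_right (integrable_h h0 h1)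
      (h_meas.aestronglyMeasurable.stronglyMeasurableAtFilter) (h_contAt h0 h1)
  have := key.neg
  rw [h_eq h0 h1] at this
  exact this

/-- Strict monotonicity of `x ↦ Л(x) + Л(s - x)` on `(0, s/2]`. -/
lemma pair_mono {s : ℝ} (hs0 : 0 < s) (hsπ : s < π) :
    StrictMonoOn (fun x => lobachevsky x + lobachevsky (s - x)) (Set.Ioc 0 (s/2)) := by
  have hd : ∀ x ∈ Set.Ioo (0:ℝ) (s/2),
      HasDerivAt (fun x => lobachevsky x + lobachevsky (s - x))
        (-Real.log (2 * Real.sin x) + Real.log (2 * Real.sin (s - x))) x := by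
    intro x hx
    have hx1 : 0 < x := hx.1
    have hx2 : x < s/2 := hx.2
    have h1 : HasDerivAt lobachevsky (-Real.log (2 * Real.sin x)) x :=
      hasDerivAt_lob hx1 (by linarith)
    have h2 : HasDerivAt lobachevsky (-Real.log (2 * Real.sin (s - x))) (s - x) :=
      hasDerivAt_lob (by linarith) (by linarith)
    have h3 : HasDerivAt (fun x : ℝ => s - x) (-1) x := by
      exact (hasDerivAt_id' x).const_sub s
    have := h1.add (h2.comp x h3)
    rw [show -Real.log (2 * Real.sin x) + Real.log (2 * Real.sin (s - x))
      = -Real.log (2 * Real.sin x) + -Real.log (2 * Real.sin (s - x)) * -1 by ring]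
    exact this
  apply strictMonoOn_of_deriv_pos (convex_Ioc 0 (s/2))
  · intro x hx
    have hx1 : 0 < x := hx.1
    have hx2 : x ≤ s/2 := hx.2
    have hc1 : ContinuousAt lobachevsky x := (hasDerivAt_lob hx1 (by linarith)).continuousAt
    have hc2 : ContinuousAt (fun x => lobachevsky (s - x)) x :=
      ((hasDerivAt_lob (θ := s - x) (by linarith) (by linarith)).comp x
        ((hasDerivAt_id' x).const_sub s)).continuousAt
    exact (hc1.add hc2).continuousWithinAt
  · intro x hx
    rw [interior_Ioc] at hx
    rw [(hd x hx).deriv]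
    have hx1 : 0 < x := hx.1
    have hx2 : x < s/2 := hx.2
    have hsx : Real.sin x < Real.sin (s - x) := by
      have key : Real.sin (s - x) - Real.sin x
          = 2 * Real.sin ((s - x - x)/2) * Real.cos ((s - x + x)/2) := Real.sin_sub_sin _ _
      have hp1 : 0 < Real.sin ((s - x - x)/2) :=
        Real.sin_pos_of_pos_of_lt_pi (by linarith) (by linarith)
      have hp2 : 0 < Real.cos ((s - x + x)/2) := by
        apply Real.cos_pos_of_mem_Ioo
        constructor <;> [linarith [Real.pi_pos]; linarith]
      nlinarith
    have hlog : Real.log (2 * Real.sin x) < Real.log (2 * Real.sin (s - x)) := by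
      apply Real.log_lt_log
      · have := Real.sin_pos_of_pos_of_lt_pi hx1 (by linarith)
        positivity
      · linarith
    linarith

lemma pair_symm (s x : ℝ) :
    lobachevsky x + lobachevsky (s - x) = lobachevsky (s - x) + lobachevsky (s - (s - x)) := by
  rw [sub_sub_cancel]; ring

/-- If `t ≤ t' ≤ s - t` then `Л t + Л (s-t) ≤ Л t' + Л (s-t')`. -/
lemma between {s t t' : ℝ} (hs0 : 0 < s) (hsπ : s < π) (ht0 : 0 < t)
    (h1 : t ≤ t') (h2 : t' ≤ s - t) :
    lobachevsky t + lobachevsky (s - t) ≤ lobachevsky t' + lobachevsky (s - t') := by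
  rcases le_or_gt t' (s/2) with hc | hc
  · rcases eq_or_lt_of_le h1 with rfl | hlt
    · exact le_refl _
    · exact ((pair_mono hs0 hsπ) ⟨ht0, by linarith⟩ ⟨by linarith, hc⟩ hlt).le
  · rw [pair_symm s t']
    rcases eq_or_lt_of_le (show t ≤ s - t' by linarith) with heq | hlt
    · rw [← heq]
    · exact ((pair_mono hs0 hsπ) ⟨ht0, by linarith⟩ ⟨by linarith, by linarith⟩ hlt).le

lemma between_strict {s t t' : ℝ} (hs0 : 0 < s) (hsπ : s < π) (ht0 : 0 < t)
    (h1 : t < t') (h2 : t' < s - t) :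
    lobachevsky t + lobachevsky (s - t) < lobachevsky t' + lobachevsky (s - t') := by
  rcases le_or_gt t' (s/2) with hc | hc
  · exact (pair_mono hs0 hsπ) ⟨ht0, by linarith⟩ ⟨by linarith, hc⟩ h1
  · rw [pair_symm s t']
    exact (pair_mono hs0 hsπ) ⟨ht0, by linarith⟩ ⟨by linarith, by linarith⟩ (by linarith)

/-- Midpoint bound. -/
lemma mid {s t : ℝ} (hs0 : 0 < s) (hsπ : s < π) (ht0 : 0 < t) (hts : t < s) :
    lobachevsky t + lobachevsky (s - t) ≤ lobachevsky (s/2) + lobachevsky (s - s/2) := by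
  rcases le_total t (s/2) with hc | hc
  · exact between hs0 hsπ ht0 hc (by linarith)
  · rw [pair_symm s t]
    exact between hs0 hsπ (by linarith) (by linarith) (by linarith)

lemma aux {α β γ : ℝ} (hα : 0 < α) (hβ : 0 < β) (hγ : 0 < γ)
    (hsum : α + β + γ = π) (h1 : α ≤ π/3) (h2 : π/3 ≤ β) :
    lobachevsky α + lobachevsky β + lobachevsky γ ≤ 3 * lobachevsky (π/3) := by
  have hpi := Real.pi_pos
  set s := α + β with hs
  have hs0 : 0 < s := by positivity
  have hsπ : s < π := by linarith
  have hstep1 : lobachevsky α + lobachevsky (s - α)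
      ≤ lobachevsky (π/3) + lobachevsky (s - π/3) :=
    between hs0 hsπ hα h1 (by simp only [hs]; linarith)
  have hβ' : s - α = β := by ring
  rw [hβ'] at hstep1
  -- second step on pair (s - π/3, γ), sum 2π/3
  have hb0 : 0 < s - π/3 := by simp only [hs]; linarith
  have hbs : s - π/3 < 2*π/3 := by simp only [hs]; linarith
  have hstep2 := mid (s := 2*π/3) (t := s - π/3) (by linarith) (by linarith) hb0 hbs
  have e1 : 2*π/3 - (s - π/3) = γ := by simp only [hs]; linarith
  have e2 : (2*π/3)/2 = π/3 := by ring
  have e3 : 2*π/3 - π/3 = π/3 := by ring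
  rw [e1, e2, e3] at hstep2
  linarith

lemma aux_strict {α β γ : ℝ} (hα : 0 < α) (hβ : 0 < β) (hγ : 0 < γ)
    (hsum : α + β + γ = π) (h1 : α < π/3) (h2 : π/3 < β) :
    lobachevsky α + lobachevsky β + lobachevsky γ < 3 * lobachevsky (π/3) := by
  have hpi := Real.pi_pos
  set s := α + β with hs
  have hs0 : 0 < s := by positivity
  have hsπ : s < π := by linarith
  have hstep1 : lobachevsky α + lobachevsky (s - α)
      < lobachevsky (π/3) + lobachevsky (s - π/3) :=
    between_strict hs0 hsπ hα h1 (by simp only [hs]; linarith)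
  have hβ' : s - α = β := by ring
  rw [hβ'] at hstep1
  have hb0 : 0 < s - π/3 := by simp only [hs]; linarith
  have hbs : s - π/3 < 2*π/3 := by simp only [hs]; linarith
  have hstep2 := mid (s := 2*π/3) (t := s - π/3) (by linarith) (by linarith) hb0 hbs
  have e1 : 2*π/3 - (s - π/3) = γ := by simp only [hs]; linarith
  have e2 : (2*π/3)/2 = π/3 := by ring
  have e3 : 2*π/3 - π/3 = π/3 := by ring
  rw [e1, e2, e3] at hstep2
  linarith

end LobAux

/-- The volume `Л(α) + Л(β) + Л(γ)` of an ideal hyperbolic tetrahedron with dihedral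
angles `α, β, γ` (with `α + β + γ = π`) is maximized exactly at the regular case
`α = β = γ = π/3`, with maximal value `3·Л(π/3)`. -/
theorem ideal_tetrahedron_volume_max (α β γ : ℝ) (hα : 0 < α) (hβ : 0 < β) (hγ : 0 < γ)
    (hsum : α + β + γ = π) :
    lobachevsky α + lobachevsky β + lobachevsky γ ≤ 3 * lobachevsky (π / 3) ∧
    (lobachevsky α + lobachevsky β + lobachevsky γ = 3 * lobachevsky (π / 3) ↔
      α = π / 3 ∧ β = π / 3 ∧ γ = π / 3) := by
  constructor
  · rcases le_total α (π/3) with h1 | h1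
    · rcases le_total β (π/3) with h2 | h2
      · linarith [LobAux.aux hα hγ hβ (by linarith) h1 (by linarith)]
      · exact LobAux.aux hα hβ hγ hsum h1 h2
    · rcases le_total β (π/3) with h2 | h2
      · linarith [LobAux.aux hβ hα hγ (by linarith) h2 h1]
      · linarith [LobAux.aux hγ hα hβ (by linarith) (by linarith) h1]
  · constructor
    · intro heq
      by_contra hne
      have hstrict : lobachevsky α + lobachevsky β + lobachevsky γ < 3 * lobachevsky (π/3) := by
        by_cases hA : α = π/3
        · subst hA
          have hBne : β ≠ π/3 := by
            intro hB; exact hne ⟨rfl, hB, by linarith⟩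
          rcases lt_or_gt_of_ne hBne with hb | hb
          · linarith [LobAux.aux_strict hβ hγ hα (by linarith) hb (by linarith)]
          · linarith [LobAux.aux_strict hγ hβ hα (by linarith) (by linarith) hb]
        · rcases lt_or_gt_of_ne hA with ha | ha
          · by_cases hb : π/3 < β
            · exact LobAux.aux_strict hα hβ hγ hsum ha hb
            · push_neg at hb
              linarith [LobAux.aux_strict hα hγ hβ (by linarith) ha (by linarith)]
          · by_cases hb : β < π/3
            · linarith [LobAux.aux_strict hβ hα hγ (by linarith) hb ha]
            · push_neg at hb
              linarith [LobAux.aux_strict hγ hα hβ (by linarith) (by linarith) ha]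
      linarith
    · rintro ⟨rfl, rfl, rfl⟩
      ring
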